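/- Let w be a permutation of the positive integers with only finitely many non-fixed points, let D be a pipe dream of w, and suppose a ladder move of order k ≥ 0 at (i,j) is applicable to D. Then D' = (D ∖ {(i,j)}) ∪ {(i−k−1,j+1)} is also a pipe dream of w. -/

import Mathlib

/-- The simple transposition corresponding to the cell `(i, j)`, namely
`s_{i+j-1}`, swapping `i+j-1` and `i+j` (as a permutation of the positive integers). -/
def cellTrans (p : ℕ+ × ℕ+) : Equiv.Perm ℕ+ :=
  Equiv.swap (p.1 + p.2 - 1) (p.1 + p.2)

/-- Key used to order cells: rows increasing, and within a row, columns decreasing. -/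
def cellKey (p : ℕ+ × ℕ+) : Lex (ℕ+ × ℕ+ᵒᵈ) :=
  toLex (p.1, OrderDual.toDual p.2)

/-- The product of the simple transpositions `s_{i+j-1}` over the cells `(i,j)` of `D`,
taken with `i` increasing and, for fixed `i`, `j` decreasing. -/
def pdWord (D : Finset (ℕ+ × ℕ+)) : Equiv.Perm ℕ+ :=
  (((D.image cellKey).sort (· ≤ ·)).map
    (fun q => cellTrans ((ofLex q).1, OrderDual.ofDual (ofLex q).2))).prod

/-- The number of inversions of a permutation of the positive integers. -/
noncomputable def invNum (w : Equiv.Perm ℕ+) : ℕ :=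
  Set.ncard {p : ℕ+ × ℕ+ | p.1 < p.2 ∧ w p.2 < w p.1}

/-- `D` is a pipe dream (RC-graph) of `w`. -/
def IsPipeDream (w : Equiv.Perm ℕ+) (D : Finset (ℕ+ × ℕ+)) : Prop :=
  D.card = invNum w ∧ pdWord D = w

/-- The number of pipe dreams of `w`. -/
noncomputable def nu (w : Equiv.Perm ℕ+) : ℕ :=
  Set.ncard {D : Finset (ℕ+ × ℕ+) | IsPipeDream w D}

/-- The number of occurrences of the pattern 132 in `w`. -/
noncomputable def p132 (w : Equiv.Perm ℕ+) : ℕ :=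
  Set.ncard {t : ℕ+ × ℕ+ × ℕ+ |
    t.1 < t.2.1 ∧ t.2.1 < t.2.2 ∧ w t.1 < w t.2.2 ∧ w t.2.2 < w t.2.1}

/-- The number of occurrences of the pattern 1432 in `w`. -/
noncomputable def p1432 (w : Equiv.Perm ℕ+) : ℕ :=
  Set.ncard {t : ℕ+ × ℕ+ × ℕ+ × ℕ+ |
    t.1 < t.2.1 ∧ t.2.1 < t.2.2.1 ∧ t.2.2.1 < t.2.2.2 ∧
    w t.1 < w t.2.2.2 ∧ w t.2.2.2 < w t.2.2.1 ∧ w t.2.2.1 < w t.2.1}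

/-- `w` avoids the pattern 1432. -/
def Avoids1432 (w : Equiv.Perm ℕ+) : Prop :=
  ¬ ∃ a b c d : ℕ+, a < b ∧ b < c ∧ c < d ∧ w a < w d ∧ w d < w c ∧ w c < w b

/-- The Rothe diagram of `w`. -/
def RD (w : Equiv.Perm ℕ+) : Set (ℕ+ × ℕ+) :=
  {p | p.2 < w p.1 ∧ p.1 < w⁻¹ p.2}

/-- The Lehmer code of `w`: `code(w)_i = #{j > i : w(j) < w(i)}`. -/
noncomputable def lehmer (w : Equiv.Perm ℕ+) (i : ℕ+) : ℕ :=
  Set.ncard {j : ℕ+ | i < j ∧ w j < w i}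

/-- The bottom pipe dream `B_w = {(i,j) : 1 ≤ j ≤ code(w)_i}` (as a set of cells). -/
def bottomSet (w : Equiv.Perm ℕ+) : Set (ℕ+ × ℕ+) :=
  {p | (p.2 : ℕ) ≤ lehmer w p.1}

/-- The top pipe dream `T_w = {(i,j) : 1 ≤ i ≤ code(w⁻¹)_j}` (as a set of cells). -/
def topSet (w : Equiv.Perm ℕ+) : Set (ℕ+ × ℕ+) :=
  {p | (p.1 : ℕ) ≤ lehmer w⁻¹ p.2}

/-- `α(S)_m`: the number of cells of `S` on the diagonal `{(i,j) : i + j - 1 = m}`. -/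
noncomputable def diagCount (S : Set (ℕ+ × ℕ+)) : ℕ+ → ℕ :=
  fun m => Set.ncard {p | p ∈ S ∧ p.1 + p.2 = m + 1}

/-- Ladder move of order `k` taking `D` to `D'`: writing `i = i₀ + k + 1` (so `i₀ = i - k - 1`
and automatically `i ≥ k + 2`), it requires `(i,j) ∈ D`, `(i,j+1) ∉ D`, `(i₀,j) ∉ D`,
`(i₀,j+1) ∉ D`, and `(i',j), (i',j+1) ∈ D` for all `i - k ≤ i' < i`; it removes `(i,j)` and
adds `(i₀, j+1)`. -/
def LadderMove (k : ℕ) (D D' : Finset (ℕ+ × ℕ+)) : Prop :=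
  ∃ i₀ j : ℕ+,
    (i₀ + k.succPNat, j) ∈ D ∧
    (i₀ + k.succPNat, j + 1) ∉ D ∧
    (i₀, j) ∉ D ∧
    (i₀, j + 1) ∉ D ∧
    (∀ i' : ℕ+, i₀ < i' → i' < i₀ + k.succPNat → (i', j) ∈ D ∧ (i', j + 1) ∈ D) ∧
    D' = insert (i₀, j + 1) (D.erase (i₀ + k.succPNat, j))

def sw (n : ℕ+) : Equiv.Perm ℕ+ := Equiv.swap n (n+1)

lemma one_lt_sum (p : ℕ+ × ℕ+) : (1:ℕ+) < p.1 + p.2 := by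
  rw [← PNat.coe_lt_coe]
  simp only [PNat.add_coe, PNat.one_coe]
  have := p.1.pos
  have := p.2.pos
  omega
lemma cellTrans_eq (p : ℕ+ × ℕ+) : cellTrans p = sw (p.1 + p.2 - 1) := by
  unfold cellTrans sw
  rw [PNat.sub_add_of_lt (one_lt_sum p)]
lemma sum_sub_one_coe (p : ℕ+ × ℕ+) : ((p.1 + p.2 - 1 : ℕ+) : ℕ) = (p.1:ℕ) + (p.2:ℕ) - 1 := by
  rw [PNat.sub_coe, if_pos (one_lt_sum p)]
  simp [PNat.add_coe]

lemma pnat_eq {a b : ℕ+} (h : (a:ℕ) = (b:ℕ)) : a = b := PNat.coe_injective h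
lemma pnat_ne {a b : ℕ+} (h : (a:ℕ) ≠ (b:ℕ)) : a ≠ b := fun e => h (congrArg _ e)

lemma sw_sq (n : ℕ+) : sw n * sw n = 1 := Equiv.swap_mul_self _ _

lemma sw_commute {a b : ℕ+} (h : (a:ℕ)+2 ≤ (b:ℕ) ∨ (b:ℕ)+2 ≤ (a:ℕ)) :
    Commute (sw a) (sw b) := by
  have h1 : b ≠ a := pnat_ne (by omega)
  have h2 : b ≠ a+1 := pnat_ne (by simp only [PNat.add_coe, PNat.one_coe]; omega)
  have h3 : b+1 ≠ a := pnat_ne (by simp only [PNat.add_coe, PNat.one_coe]; omega)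
  have h4 : b+1 ≠ a+1 := pnat_ne (by simp only [PNat.add_coe, PNat.one_coe]; omega)
  have key : sw a * sw b * (sw a)⁻¹ = sw b := by
    unfold sw
    rw [← Equiv.swap_apply_apply]
    rw [Equiv.swap_apply_of_ne_of_ne h1 h2, Equiv.swap_apply_of_ne_of_ne h3 h4]
  rw [mul_inv_eq_iff_eq_mul] at key
  exact key

lemma sw_braid (a : ℕ+) : sw a * sw (a+1) * sw a = sw (a+1) * sw a * sw (a+1) := by
  have hne2 : (a+1+1 : ℕ+) ≠ a+1 := pnat_ne (by simp only [PNat.add_coe, PNat.one_coe]; omega)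
  have hne3 : (a+1+1 : ℕ+) ≠ a := pnat_ne (by simp only [PNat.add_coe, PNat.one_coe]; omega)
  have hne4 : a ≠ a+1 := pnat_ne (by simp only [PNat.add_coe, PNat.one_coe]; omega)
  have hne5 : a ≠ a+1+1 := pnat_ne (by simp only [PNat.add_coe, PNat.one_coe]; omega)
  unfold sw
  calc Equiv.swap a (a+1) * Equiv.swap (a+1) (a+1+1) * Equiv.swap a (a+1)
      = Equiv.swap (a+1) a * Equiv.swap (a+1+1) (a+1) * Equiv.swap (a+1) a := by
        rw [Equiv.swap_comm a (a+1), Equiv.swap_comm (a+1) (a+1+1)]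
    _ = Equiv.swap a (a+1+1) := Equiv.swap_mul_swap_mul_swap hne2 hne3
    _ = Equiv.swap (a+1+1) a := Equiv.swap_comm _ _
    _ = Equiv.swap (a+1) (a+1+1) * Equiv.swap a (a+1) * Equiv.swap (a+1) (a+1+1) :=
        (Equiv.swap_mul_swap_mul_swap hne4 hne5).symm

lemma sort_union {α : Type*} [LinearOrder α] (s t : Finset α)
    (h : ∀ a ∈ s, ∀ b ∈ t, a < b) :
    (s ∪ t).sort (· ≤ ·) = s.sort (· ≤ ·) ++ t.sort (· ≤ ·) := by
  have hd : Disjoint s t := by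
    rw [Finset.disjoint_left]
    intro a ha hat
    exact absurd (h a ha a hat) (lt_irrefl a)
  refine (fun hp hs => List.Perm.eq_of_pairwise' (Finset.pairwise_sort _ _) hs hp) ?_ ?_
  · rw [← Multiset.coe_eq_coe, ← Multiset.coe_add, Finset.sort_eq, Finset.sort_eq,
      Finset.sort_eq, ← Finset.disjUnion_eq_union s t hd]
    rfl
  · rw [List.pairwise_append]
    refine ⟨Finset.pairwise_sort _ _, Finset.pairwise_sort _ _, ?_⟩
    intro a ha b hb
    rw [Finset.mem_sort] at ha hb
    exact le_of_lt (h a ha b hb)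

lemma cellKey_le_iff (p q : ℕ+ × ℕ+) :
    cellKey p ≤ cellKey q ↔ p.1 < q.1 ∨ (p.1 = q.1 ∧ q.2 ≤ p.2) := by
  unfold cellKey; rw [Prod.Lex.le_iff]; rfl
lemma cellKey_lt_iff (p q : ℕ+ × ℕ+) :
    cellKey p < cellKey q ↔ p.1 < q.1 ∨ (p.1 = q.1 ∧ q.2 < p.2) := by
  unfold cellKey; rw [Prod.Lex.lt_iff]; rfl
lemma cellKey_inj : Function.Injective cellKey := by
  intro p q h
  have : ((ofLex (cellKey p)).1, OrderDual.ofDual (ofLex (cellKey p)).2)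
      = ((ofLex (cellKey q)).1, OrderDual.ofDual (ofLex (cellKey q)).2) := by rw [h]
  exact this

lemma pdWord_union {A B : Finset (ℕ+ × ℕ+)} (h : ∀ a ∈ A, ∀ b ∈ B, cellKey a < cellKey b) :
    pdWord (A ∪ B) = pdWord A * pdWord B := by
  unfold pdWord
  rw [Finset.image_union, sort_union, List.map_append, List.prod_append]
  intro a ha b hb
  obtain ⟨a, haA, rfl⟩ := Finset.mem_image.mp ha
  obtain ⟨b, hbB, rfl⟩ := Finset.mem_image.mp hb
  exact h a haA b hbB

lemma pdWord_singleton (p : ℕ+ × ℕ+) : pdWord {p} = cellTrans p := by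
  unfold pdWord
  rw [Finset.image_singleton, Finset.sort_singleton, List.map_singleton, List.prod_singleton]
  rfl

lemma commute_pdWord {n : ℕ+} {F : Finset (ℕ+ × ℕ+)}
    (h : ∀ p ∈ F, ((p.1:ℕ) + (p.2:ℕ) + 1 ≤ (n:ℕ)) ∨ ((n:ℕ) + 3 ≤ (p.1:ℕ) + (p.2:ℕ))) :
    Commute (sw n) (pdWord F) := by
  unfold pdWord
  apply Commute.list_prod_right
  intro x hx
  rw [List.mem_map] at hx
  obtain ⟨q, hq, rfl⟩ := hx
  rw [Finset.mem_sort, Finset.mem_image] at hq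
  obtain ⟨p, hp, rfl⟩ := hq
  show Commute (sw n) (cellTrans p)
  rw [cellTrans_eq]
  apply sw_commute
  have h1 := sum_sub_one_coe p
  have h2 := p.1.pos
  have h3 := p.2.pos
  rcases h p hp with h4 | h4
  · right; omega
  · left; omega

lemma pnat_lt {a b : ℕ+} (h : (a:ℕ) < (b:ℕ)) : a < b := (PNat.coe_lt_coe _ _).mp h

lemma pc_lt {a b : ℕ+} (h : a < b) : (a:ℕ) < (b:ℕ) := (PNat.coe_lt_coe _ _).mpr h
lemma pc_le {a b : ℕ+} (h : a ≤ b) : (a:ℕ) ≤ (b:ℕ) := (PNat.coe_le_coe _ _).mpr h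
lemma prod_eq {p : ℕ+ × ℕ+} {a b : ℕ+} (h1 : (p.1:ℕ) = (a:ℕ)) (h2 : (p.2:ℕ) = (b:ℕ)) :
    p = (a, b) := Prod.ext_iff.mpr ⟨pnat_eq h1, pnat_eq h2⟩

lemma commute_sw_F {i₀ j : ℕ+} {F : Finset (ℕ+ × ℕ+)}
    (hb : ∀ p ∈ F, cellKey (i₀, j+1) ≤ cellKey p ∧ cellKey p ≤ cellKey (i₀+1, j))
    (h1 : (i₀,j) ∉ F) (h2 : (i₀,j+1) ∉ F) (h3 : (i₀+1,j) ∉ F) (h4 : (i₀+1,j+1) ∉ F) :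
    Commute (sw (i₀+j)) (pdWord F) := by
  apply commute_pdWord
  intro p hp
  obtain ⟨hlo, hhi⟩ := hb p hp
  rw [cellKey_le_iff] at hlo hhi
  have A := p.1.pos
  have B := p.2.pos
  have e1 : (i₀:ℕ) < (p.1:ℕ) ∨ ((i₀:ℕ) = (p.1:ℕ) ∧ (p.2:ℕ) ≤ (j:ℕ)+1) := by
    rcases hlo with h | ⟨h, h'⟩
    · exact Or.inl (pc_lt h)
    · refine Or.inr ⟨congrArg _ h, ?_⟩
      have := pc_le h'
      simpa only [PNat.add_coe, PNat.one_coe] using this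
  have e2 : (p.1:ℕ) < (i₀:ℕ)+1 ∨ ((p.1:ℕ) = (i₀:ℕ)+1 ∧ (j:ℕ) ≤ (p.2:ℕ)) := by
    rcases hhi with h | ⟨h, h'⟩
    · refine Or.inl ?_
      have := pc_lt h
      simpa only [PNat.add_coe, PNat.one_coe] using this
    · refine Or.inr ⟨?_, pc_le h'⟩
      have := congrArg (fun x : ℕ+ => (x:ℕ)) h
      simpa only [PNat.add_coe, PNat.one_coe] using this
  have cj1 : (((j+1 : ℕ+)):ℕ) = (j:ℕ)+1 := by simp only [PNat.add_coe, PNat.one_coe]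
  have ci1 : (((i₀+1 : ℕ+)):ℕ) = (i₀:ℕ)+1 := by simp only [PNat.add_coe, PNat.one_coe]
  have n1 : ¬((p.1:ℕ) = (i₀:ℕ) ∧ (p.2:ℕ) = (j:ℕ)) := by
    rintro ⟨u, v⟩
    exact h1 (prod_eq u v ▸ hp)
  have n2 : ¬((p.1:ℕ) = (i₀:ℕ) ∧ (p.2:ℕ) = (j:ℕ)+1) := by
    rintro ⟨u, v⟩
    exact h2 (prod_eq u (v.trans cj1.symm) ▸ hp)
  have n3 : ¬((p.1:ℕ) = (i₀:ℕ)+1 ∧ (p.2:ℕ) = (j:ℕ)) := by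
    rintro ⟨u, v⟩
    exact h3 (prod_eq (u.trans ci1.symm) v ▸ hp)
  have n4 : ¬((p.1:ℕ) = (i₀:ℕ)+1 ∧ (p.2:ℕ) = (j:ℕ)+1) := by
    rintro ⟨u, v⟩
    exact h4 (prod_eq (u.trans ci1.symm) (v.trans cj1.symm) ▸ hp)
  simp only [PNat.add_coe]
  omega

lemma pnat_lt_add_one (j : ℕ+) : j < j+1 :=
  pnat_lt (by simp only [PNat.add_coe, PNat.one_coe]; omega)

lemma key_row_lt {i i' b b' : ℕ+} (h : i < i') : cellKey (i, b) < cellKey (i', b') :=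
  (cellKey_lt_iff _ _).mpr (Or.inl h)

lemma key_col_lt {i b b' : ℕ+} (h : b' < b) : cellKey (i, b) < cellKey (i, b') :=
  (cellKey_lt_iff _ _).mpr (Or.inr ⟨rfl, h⟩)

lemma between_cells {i₁ j : ℕ+} {p : ℕ+ × ℕ+} (h : cellKey (i₁, j+1) < cellKey p)
    (h' : cellKey p < cellKey (i₁, j)) : False := by
  rw [cellKey_lt_iff] at h h'
  rcases h with h | ⟨he, h2⟩ <;> rcases h' with h' | ⟨he', h2'⟩
  · exact absurd (h.trans h') (lt_irrefl _)
  · exact absurd (he' ▸ h) (lt_irrefl _)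
  · exact absurd (he ▸ h') (lt_irrefl _)
  · have u1 := pc_lt h2
    have u2 := pc_lt h2'
    simp only [PNat.add_coe, PNat.one_coe] at u1 u2
    omega

lemma cellTrans_pair (a b : ℕ+) : cellTrans (a, b) = sw (a + b - 1) := cellTrans_eq _

lemma pair_sub_one_coe (a b : ℕ+) : ((a + b - 1 : ℕ+) : ℕ) = (a:ℕ) + (b:ℕ) - 1 :=
  sum_sub_one_coe (a, b)

lemma key_lemma : ∀ k : ℕ, ∀ i₀ j : ℕ+, ∀ E : Finset (ℕ+ × ℕ+),
    (∀ p ∈ E, cellKey (i₀, j+1) ≤ cellKey p ∧ cellKey p ≤ cellKey (i₀ + k.succPNat, j)) →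
    (i₀ + k.succPNat, j) ∈ E →
    (i₀ + k.succPNat, j+1) ∉ E →
    (i₀, j) ∉ E → (i₀, j+1) ∉ E →
    (∀ i' : ℕ+, i₀ < i' → i' < i₀ + k.succPNat → (i', j) ∈ E ∧ (i', j+1) ∈ E) →
    sw (i₀+j) * pdWord E = pdWord (E.erase (i₀ + k.succPNat, j)) := by
  intro k
  induction k with
  | zero =>
    intro i₀ j E hband hmem hnotm h0j h0j1 _
    have hs : (Nat.succPNat 0) = (1:ℕ+) := rfl
    rw [hs] at hband hmem hnotm ⊢
    have hE : E = E.erase (i₀+1, j) ∪ {(i₀+1, j)} := by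
      rw [Finset.union_comm, ← Finset.insert_eq, Finset.insert_erase hmem]
    have hkey : ∀ p ∈ E.erase (i₀+1, j), cellKey p < cellKey (i₀+1, j) := by
      intro p hp
      obtain ⟨hne, hpE⟩ := Finset.mem_erase.mp hp
      exact lt_of_le_of_ne (hband p hpE).2 (fun h => hne (cellKey_inj h))
    have hcc : cellTrans (i₀+1, j) = sw (i₀+j) := by
      rw [cellTrans_pair]
      congr 1
      apply pnat_eq
      rw [pair_sub_one_coe]
      have := j.pos
      simp only [PNat.add_coe, PNat.one_coe]
      omega
    have hcom : Commute (sw (i₀+j)) (pdWord (E.erase (i₀+1, j))) := by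
      apply commute_sw_F
      · exact fun p hp => ⟨(hband p (Finset.mem_of_mem_erase hp)).1,
          (hband p (Finset.mem_of_mem_erase hp)).2⟩
      · exact fun h => h0j (Finset.mem_of_mem_erase h)
      · exact fun h => h0j1 (Finset.mem_of_mem_erase h)
      · exact Finset.notMem_erase _ _
      · exact fun h => hnotm (Finset.mem_of_mem_erase h)
    conv_lhs => rw [hE]
    rw [pdWord_union (fun a ha b hb => by
          rw [Finset.mem_singleton] at hb
          subst hb
          exact hkey a ha),
        pdWord_singleton, hcc, ← mul_assoc, hcom.eq, mul_assoc, sw_sq, mul_one]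
  | succ k ih =>
    intro i₀ j E hband hmem hnotm h0j h0j1 hmid
    classical
    set n : ℕ+ := i₀ + j with hn
    set i₁ : ℕ+ := i₀ + 1 with hi1
    set iK : ℕ+ := i₀ + (k+1).succPNat with hiK
    have hiK1 : iK = i₁ + k.succPNat := by
      apply pnat_eq
      rw [hiK, hi1]
      simp only [PNat.add_coe, PNat.one_coe, Nat.succPNat_coe]
      omega
    have lt01 : i₀ < i₁ := by
      apply pnat_lt
      rw [hi1]
      simp only [PNat.add_coe, PNat.one_coe]
      omega
    have lt1K : i₁ < iK := by
      apply pnat_lt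
      rw [hi1, hiK]
      simp only [PNat.add_coe, PNat.one_coe, Nat.succPNat_coe]
      omega
    obtain ⟨hc2E, hc1E⟩ := hmid i₁ lt01 lt1K
    have k12 : cellKey (i₁, j+1) < cellKey (i₁, j) := key_col_lt (pnat_lt_add_one j)
    set F : Finset (ℕ+ × ℕ+) := E.filter (fun p => cellKey p < cellKey (i₁, j+1)) with hF
    set G : Finset (ℕ+ × ℕ+) := E.filter (fun p => cellKey (i₁, j) < cellKey p) with hG
    have kF : ∀ a ∈ F, cellKey a < cellKey (i₁, j+1) := fun a ha => (Finset.mem_filter.mp ha).2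
    have kG : ∀ b ∈ G, cellKey (i₁, j) < cellKey b := fun b hb => (Finset.mem_filter.mp hb).2
    have memF : ∀ a ∈ F, a ∈ E := fun a ha => (Finset.mem_filter.mp ha).1
    have memG : ∀ b ∈ G, b ∈ E := fun b hb => (Finset.mem_filter.mp hb).1
    have hdec : E = F ∪ ({(i₁, j+1)} ∪ ({(i₁, j)} ∪ G)) := by
      ext p
      simp only [Finset.mem_union, Finset.mem_singleton, hF, hG, Finset.mem_filter]
      constructor
      · intro hp
        rcases lt_trichotomy (cellKey p) (cellKey (i₁, j+1)) with h | h | h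
        · exact Or.inl ⟨hp, h⟩
        · exact Or.inr (Or.inl (cellKey_inj h))
        · rcases lt_trichotomy (cellKey p) (cellKey (i₁, j)) with h' | h' | h'
          · exact absurd (between_cells h h') (fun x => x)
          · exact Or.inr (Or.inr (Or.inl (cellKey_inj h')))
          · exact Or.inr (Or.inr (Or.inr ⟨hp, h'⟩))
      · rintro (⟨hp, _⟩ | h | h | ⟨hp, _⟩)
        · exact hp
        · rw [h]; exact hc1E
        · rw [h]; exact hc2E
        · exact hp
    have hordF : ∀ a ∈ F, ∀ b ∈ ({(i₁, j+1)} ∪ ({(i₁, j)} ∪ G)), cellKey a < cellKey b := by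
      intro a ha b hb
      have h1 := kF a ha
      simp only [Finset.mem_union, Finset.mem_singleton] at hb
      rcases hb with rfl | rfl | hb
      · exact h1
      · exact h1.trans k12
      · exact (h1.trans k12).trans (kG b hb)
    have hct1 : cellTrans (i₁, j+1) = sw (n+1) := by
      rw [cellTrans_pair]
      congr 1
      apply pnat_eq
      rw [pair_sub_one_coe, hi1, hn]
      have := j.pos
      simp only [PNat.add_coe, PNat.one_coe]
      omega
    have hct2 : cellTrans (i₁, j) = sw n := by
      rw [cellTrans_pair]
      congr 1
      apply pnat_eq
      rw [pair_sub_one_coe, hi1, hn]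
      have := j.pos
      simp only [PNat.add_coe, PNat.one_coe]
      omega
    have hsplit : pdWord E = pdWord F * (sw (n+1) * (sw n * pdWord G)) := by
      conv_lhs => rw [hdec]
      rw [pdWord_union hordF,
          pdWord_union (fun a ha b hb => by
            rw [Finset.mem_singleton] at ha
            subst ha
            simp only [Finset.mem_union, Finset.mem_singleton] at hb
            rcases hb with rfl | hb
            · exact k12
            · exact k12.trans (kG b hb)),
          pdWord_union (fun a ha b hb => by
            rw [Finset.mem_singleton] at ha
            subst ha
            exact kG b hb),
          pdWord_singleton, pdWord_singleton, hct1, hct2]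
    have hGband : ∀ p ∈ G, cellKey (i₁, j+1) ≤ cellKey p ∧ cellKey p ≤ cellKey (i₁ + k.succPNat, j) := by
      intro p hp
      refine ⟨le_of_lt (k12.trans (kG p hp)), ?_⟩
      rw [← hiK1]
      exact (hband p (memG p hp)).2
    have hGmem : (i₁ + k.succPNat, j) ∈ G := by
      rw [← hiK1]
      exact Finset.mem_filter.mpr ⟨hmem, key_row_lt lt1K⟩
    have hGnotm : (i₁ + k.succPNat, j+1) ∉ G := by
      rw [← hiK1]
      exact fun h => hnotm (memG _ h)
    have hG0j : (i₁, j) ∉ G := fun h => lt_irrefl _ (kG _ h)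
    have hG0j1 : (i₁, j+1) ∉ G := fun h => lt_asymm k12 (kG _ h)
    have hGmid : ∀ i' : ℕ+, i₁ < i' → i' < i₁ + k.succPNat → (i', j) ∈ G ∧ (i', j+1) ∈ G := by
      intro i' h1 h2
      rw [← hiK1] at h2
      obtain ⟨m1, m2⟩ := hmid i' (lt01.trans h1) h2
      exact ⟨Finset.mem_filter.mpr ⟨m1, key_row_lt h1⟩, Finset.mem_filter.mpr ⟨m2, key_row_lt h1⟩⟩
    have ihG := ih i₁ j G hGband hGmem hGnotm hG0j hG0j1 hGmid
    have hij : i₁ + j = n + 1 := by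
      apply pnat_eq
      rw [hi1, hn]
      simp only [PNat.add_coe, PNat.one_coe]
      omega
    rw [hij, ← hiK1] at ihG
    have hiKne1 : (iK, j) ≠ (i₁, j+1) := fun h =>
      absurd (congrArg Prod.fst h) (ne_of_gt lt1K)
    have hiKne2 : (iK, j) ≠ (i₁, j) := fun h =>
      absurd (congrArg Prod.fst h) (ne_of_gt lt1K)
    have hiKF : (iK, j) ∉ F := fun h =>
      lt_irrefl _ ((kF _ h).trans (k12.trans (key_row_lt lt1K)))
    have herase : E.erase (iK, j) = F ∪ ({(i₁, j+1)} ∪ ({(i₁, j)} ∪ G.erase (iK, j))) := by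
      conv_lhs => rw [hdec]
      rw [Finset.erase_union_distrib, Finset.erase_union_distrib, Finset.erase_union_distrib,
          Finset.erase_eq_of_notMem hiKF,
          Finset.erase_eq_of_notMem (by simp [hiKne1]),
          Finset.erase_eq_of_notMem (by simp [hiKne2])]
    have hsplit' : pdWord (E.erase (iK, j))
        = pdWord F * (sw (n+1) * (sw n * pdWord (G.erase (iK, j)))) := by
      rw [herase]
      rw [pdWord_union (fun a ha b hb => by
            have h1 := kF a ha
            simp only [Finset.mem_union, Finset.mem_singleton] at hb
            rcases hb with rfl | rfl | hb
            · exact h1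
            · exact h1.trans k12
            · exact (h1.trans k12).trans (kG b (Finset.mem_of_mem_erase hb))),
          pdWord_union (fun a ha b hb => by
            rw [Finset.mem_singleton] at ha
            subst ha
            simp only [Finset.mem_union, Finset.mem_singleton] at hb
            rcases hb with rfl | hb
            · exact k12
            · exact k12.trans (kG b (Finset.mem_of_mem_erase hb))),
          pdWord_union (fun a ha b hb => by
            rw [Finset.mem_singleton] at ha
            subst ha
            exact kG b (Finset.mem_of_mem_erase hb)),
          pdWord_singleton, pdWord_singleton, hct1, hct2]
    have hcomF : Commute (sw n) (pdWord F) := by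
      rw [hn]
      apply commute_sw_F (i₀ := i₀) (j := j)
      · exact fun p hp => ⟨(hband p (memF p hp)).1, le_of_lt ((kF p hp).trans k12)⟩
      · exact fun h => h0j (memF _ h)
      · exact fun h => h0j1 (memF _ h)
      · exact fun h => lt_asymm k12 (kF _ h)
      · exact fun h => lt_irrefl _ (kF _ h)
    rw [hsplit, hsplit', ← ihG, ← mul_assoc, hcomF.eq, mul_assoc]
    congr 1
    simp only [← mul_assoc]
    rw [sw_braid n]

/-- a ladder move applied to a pipe dream of `w` yields a pipe dream of `w`. -/
theorem ladder_move_preserves_pipe_dream (w : Equiv.Perm ℕ+)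
    (hw : {x : ℕ+ | w x ≠ x}.Finite)
    (D D' : Finset (ℕ+ × ℕ+)) (hD : IsPipeDream w D) (k : ℕ)
    (h : LadderMove k D D') : IsPipeDream w D' := by
  obtain ⟨i₀, j, hmem, hnotm, h0j, h0j1, hmid, hD'⟩ := h
  obtain ⟨hcard, hword⟩ := hD
  classical
  constructor
  · rw [hD', Finset.card_insert_of_notMem (fun hc => h0j1 (Finset.mem_of_mem_erase hc)),
      Finset.card_erase_of_mem hmem, ← hcard]
    have : 0 < D.card := Finset.card_pos.mpr ⟨_, hmem⟩
    omega
  · set iK : ℕ+ := i₀ + k.succPNat with hiK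
    set A := D.filter (fun p => cellKey p < cellKey (i₀, j+1)) with hA
    set E := D.filter (fun p => cellKey (i₀, j+1) ≤ cellKey p ∧ cellKey p ≤ cellKey (iK, j)) with hE
    set Z := D.filter (fun p => cellKey (iK, j) < cellKey p) with hZ
    have lt0K : i₀ < iK := by
      apply pnat_lt
      rw [hiK]
      simp only [PNat.add_coe, Nat.succPNat_coe]
      omega
    have k0K : cellKey (i₀, j+1) < cellKey (iK, j) := key_row_lt lt0K
    have kA : ∀ a ∈ A, cellKey a < cellKey (i₀, j+1) := fun a ha => (Finset.mem_filter.mp ha).2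
    have kE : ∀ a ∈ E, cellKey (i₀, j+1) ≤ cellKey a ∧ cellKey a ≤ cellKey (iK, j) :=
      fun a ha => (Finset.mem_filter.mp ha).2
    have kZ : ∀ a ∈ Z, cellKey (iK, j) < cellKey a := fun a ha => (Finset.mem_filter.mp ha).2
    have memA : ∀ a ∈ A, a ∈ D := fun a ha => (Finset.mem_filter.mp ha).1
    have memE : ∀ a ∈ E, a ∈ D := fun a ha => (Finset.mem_filter.mp ha).1
    have memZ : ∀ a ∈ Z, a ∈ D := fun a ha => (Finset.mem_filter.mp ha).1
    have hdec : D = A ∪ (E ∪ Z) := by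
      ext p
      simp only [hA, hE, hZ, Finset.mem_union, Finset.mem_filter]
      constructor
      · intro hp
        rcases lt_or_ge (cellKey p) (cellKey (i₀, j+1)) with h1 | h1
        · exact Or.inl ⟨hp, h1⟩
        · rcases le_or_gt (cellKey p) (cellKey (iK, j)) with h2 | h2
          · exact Or.inr (Or.inl ⟨hp, h1, h2⟩)
          · exact Or.inr (Or.inr ⟨hp, h2⟩)
      · rintro (⟨hp, _⟩ | ⟨hp, _⟩ | ⟨hp, _⟩) <;> exact hp
    -- key_lemma hypotheses for E
    have hEmem : (iK, j) ∈ E := Finset.mem_filter.mpr ⟨hmem, le_of_lt k0K, le_refl _⟩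
    have hEnotm : (iK, j+1) ∉ E := fun hc => hnotm (memE _ hc)
    have hE0j : (i₀, j) ∉ E := fun hc => h0j (memE _ hc)
    have hE0j1 : (i₀, j+1) ∉ E := fun hc => h0j1 (memE _ hc)
    have hEmid : ∀ i' : ℕ+, i₀ < i' → i' < iK → (i', j) ∈ E ∧ (i', j+1) ∈ E := by
      intro i' u1 u2
      obtain ⟨m1, m2⟩ := hmid i' u1 u2
      constructor
      · exact Finset.mem_filter.mpr ⟨m1, le_of_lt (key_row_lt u1), le_of_lt (key_row_lt u2)⟩
      · exact Finset.mem_filter.mpr ⟨m2, le_of_lt (key_row_lt u1), le_of_lt (key_row_lt u2)⟩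
    have hkl := key_lemma k i₀ j E kE hEmem hEnotm hE0j hE0j1 hEmid
    have hct0 : cellTrans (i₀, j+1) = sw (i₀ + j) := by
      rw [cellTrans_pair]
      congr 1
      apply pnat_eq
      rw [pair_sub_one_coe]
      simp only [PNat.add_coe, PNat.one_coe]
      omega
    -- D' decomposition
    have hne0K : (i₀, j+1) ≠ (iK, j) := fun hc =>
      absurd (congrArg Prod.fst hc) (ne_of_lt lt0K)
    have hdec' : insert (i₀, j+1) (D.erase (iK, j))
        = A ∪ (({(i₀, j+1)} ∪ E.erase (iK, j)) ∪ Z) := by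
      ext p
      simp only [Finset.mem_insert, Finset.mem_union, Finset.mem_singleton, Finset.mem_erase]
      constructor
      · rintro (rfl | ⟨hne, hp⟩)
        · exact Or.inr (Or.inl (Or.inl rfl))
        · rcases lt_or_ge (cellKey p) (cellKey (i₀, j+1)) with h1 | h1
          · exact Or.inl (Finset.mem_filter.mpr ⟨hp, h1⟩)
          · rcases le_or_gt (cellKey p) (cellKey (iK, j)) with h2 | h2
            · exact Or.inr (Or.inl (Or.inr ⟨hne, Finset.mem_filter.mpr ⟨hp, h1, h2⟩⟩))
            · exact Or.inr (Or.inr (Finset.mem_filter.mpr ⟨hp, h2⟩))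
      · rintro (hp | (rfl | ⟨hne, hp⟩) | hp)
        · refine Or.inr ⟨?_, memA _ hp⟩
          intro hc
          exact lt_asymm (hc ▸ (kA p hp)) k0K
        · exact Or.inl rfl
        · exact Or.inr ⟨hne, memE _ hp⟩
        · refine Or.inr ⟨?_, memZ _ hp⟩
          intro hc
          exact lt_irrefl _ (hc ▸ (kZ p hp))
    have ordAX : ∀ a ∈ A, ∀ b ∈ (({(i₀, j+1)} : Finset (ℕ+ × ℕ+)) ∪ E.erase (iK, j)) ∪ Z,
        cellKey a < cellKey b := by
      intro a ha b hb
      have h1 := kA a ha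
      simp only [Finset.mem_union, Finset.mem_singleton] at hb
      rcases hb with (rfl | hb) | hb
      · exact h1
      · exact h1.trans_le (kE b (Finset.mem_of_mem_erase hb)).1
      · exact (h1.trans k0K).trans (kZ b hb)
    have ordXZ : ∀ a ∈ ({(i₀, j+1)} : Finset (ℕ+ × ℕ+)) ∪ E.erase (iK, j), ∀ b ∈ Z,
        cellKey a < cellKey b := by
      intro a ha b hb
      simp only [Finset.mem_union, Finset.mem_singleton] at ha
      rcases ha with rfl | ha
      · exact k0K.trans (kZ b hb)
      · exact ((kE a (Finset.mem_of_mem_erase ha)).2).trans_lt (kZ b hb)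
    have ord0E : ∀ a ∈ ({(i₀, j+1)} : Finset (ℕ+ × ℕ+)), ∀ b ∈ E.erase (iK, j),
        cellKey a < cellKey b := by
      intro a ha b hb
      rw [Finset.mem_singleton] at ha
      subst ha
      refine lt_of_le_of_ne (kE b (Finset.mem_of_mem_erase hb)).1 ?_
      intro hc
      have : (i₀, j+1) = b := cellKey_inj hc
      exact hE0j1 (this ▸ Finset.mem_of_mem_erase hb)
    have ordEZ : ∀ a ∈ E, ∀ b ∈ Z, cellKey a < cellKey b :=
      fun a ha b hb => ((kE a ha).2).trans_lt (kZ b hb)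
    have ordAEZ : ∀ a ∈ A, ∀ b ∈ E ∪ Z, cellKey a < cellKey b := by
      intro a ha b hb
      rcases Finset.mem_union.mp hb with hb | hb
      · exact (kA a ha).trans_le (kE b hb).1
      · exact ((kA a ha).trans k0K).trans (kZ b hb)
    have sw_cancel : ∀ σ : Equiv.Perm ℕ+, sw (i₀+j) * (sw (i₀+j) * σ) = σ :=
      fun σ => Equiv.swap_mul_self_mul _ _ σ
    rw [hD', hdec', pdWord_union ordAX, pdWord_union ordXZ, pdWord_union ord0E,
      pdWord_singleton, hct0, ← hkl, sw_cancel, ← pdWord_union ordEZ, ← pdWord_union ordAEZ,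
      ← hdec, hword]
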